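/- Let X be an infinite set, let G be a subgroup of Sym(X) fully containing FAlt(X), and let ρ ∈ N_{Sym(X)}(G). If there exists r ∈ ℕ such that ρ has finitely many orbits of size r, then the automorphism φ_ρ of G has infinitely many twisted conjugacy classes, i.e. R(φ_ρ) = ∞. -/

import Mathlib

/-- `FAlt X`: the subgroup of `Equiv.Perm X` generated by all 3-cycles, i.e. by those
permutations whose support has exactly 3 elements. -/
def FAlt (X : Type*) : Subgroup (Equiv.Perm X) :=
  Subgroup.closure {σ : Equiv.Perm X | {x | σ x ≠ x}.ncard = 3}

/-- Twisted conjugacy: `a` and `b` are `φ`-twisted conjugate if `(φ x)⁻¹ * a * x = b`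
for some `x`. -/
def TwistedConj {G : Type*} [Group G] (φ : G ≃* G) (a b : G) : Prop :=
  ∃ x : G, (φ x)⁻¹ * a * x = b

/-- For `ρ` in the normalizer of `G`, the automorphism `φ_ρ : g ↦ ρ⁻¹ * g * ρ` of `G`. -/
def phiRho {X : Type*} (G : Subgroup (Equiv.Perm X)) (ρ : Equiv.Perm X)
    (hρ : ∀ g : Equiv.Perm X, g ∈ G ↔ ρ⁻¹ * g * ρ ∈ G) : ↥G ≃* ↥G where
  toFun g := ⟨ρ⁻¹ * g * ρ, (hρ g).mp g.2⟩
  invFun g := ⟨ρ * g * ρ⁻¹, (hρ (ρ * (g : Equiv.Perm X) * ρ⁻¹)).mpr (by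
    have h : ρ⁻¹ * (ρ * (g : Equiv.Perm X) * ρ⁻¹) * ρ = (g : Equiv.Perm X) := by group
    rw [h]; exact g.2)⟩
  left_inv g := Subtype.ext (by simp only; group)
  right_inv g := Subtype.ext (by simp only; group)
  map_mul' g h := Subtype.ext (by push_cast; group)


set_option linter.unusedSectionVars false
set_option linter.unusedVariables false
set_option maxHeartbeats 1000000

namespace RinfAux

open Equiv Equiv.Perm

variable {X : Type*}

/-- The orbit of `x` under a permutation. -/
def orb (σ : Equiv.Perm X) (x : X) : Set X := Set.range fun d : ℤ => (σ ^ d) x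

/-- The set of points lying on orbits of size `r`. -/
def nset (r : ℕ) (σ : Equiv.Perm X) : Set X := {x | (orb σ x).ncard = r}

lemma mem_orb_self (σ : Equiv.Perm X) (x : X) : x ∈ orb σ x := ⟨0, rfl⟩

lemma zpow_apply_mem_orb (σ : Equiv.Perm X) (x : X) (d : ℤ) : (σ ^ d) x ∈ orb σ x := ⟨d, rfl⟩

lemma orb_eq_of_mem {σ : Equiv.Perm X} {x y : X} (h : y ∈ orb σ x) : orb σ y = orb σ x := by
  obtain ⟨k, rfl⟩ := h
  ext w
  constructor
  · rintro ⟨d, rfl⟩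
    refine ⟨d + k, ?_⟩
    simp only [zpow_add, Equiv.Perm.mul_apply]
  · rintro ⟨d, rfl⟩
    refine ⟨d - k, ?_⟩
    simp only
    rw [← Equiv.Perm.mul_apply, ← zpow_add, sub_add_cancel]

lemma mapsTo_orb (σ : Equiv.Perm X) (x : X) : Set.MapsTo σ (orb σ x) (orb σ x) := by
  rintro y ⟨d, rfl⟩
  refine ⟨1 + d, ?_⟩
  simp only [zpow_add, zpow_one, Equiv.Perm.mul_apply]

lemma apply_mem_orb (σ : Equiv.Perm X) (x : X) : σ x ∈ orb σ x :=
  mapsTo_orb σ x (mem_orb_self σ x)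

/-- a finite orbit is periodic -/
lemma exists_pow_eq_self {σ : Equiv.Perm X} {x : X} (h : (orb σ x).Finite) :
    ∃ p : ℕ, 0 < p ∧ (σ ^ p) x = x := by
  have : ¬ Function.Injective fun d : ℤ => (σ ^ d) x := by
    intro hinj
    exact (Set.infinite_range_of_injective hinj) h
  simp only [Function.Injective, not_forall] at this
  obtain ⟨d1, d2, heq, hne⟩ := this
  rcases lt_or_gt_of_ne hne with hlt | hlt
  · refine ⟨(d2 - d1).toNat, by omega, ?_⟩
    have : ((d2 - d1).toNat : ℤ) = d2 - d1 := Int.toNat_of_nonneg (by omega)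
    rw [← zpow_natCast, this]
    have := congrArg (⇑(σ ^ (-d1))) heq
    simp only [← Equiv.Perm.mul_apply, ← zpow_add] at this ⊢
    rw [sub_eq_add_neg]
    simpa [add_comm] using this.symm
  · refine ⟨(d1 - d2).toNat, by omega, ?_⟩
    have : ((d1 - d2).toNat : ℤ) = d1 - d2 := Int.toNat_of_nonneg (by omega)
    rw [← zpow_natCast, this]
    have := congrArg (⇑(σ ^ (-d2))) heq
    simp only [← Equiv.Perm.mul_apply, ← zpow_add] at this ⊢
    rw [sub_eq_add_neg]
    simpa [add_comm] using this

/-- periodic orbits are the finite forward orbit -/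
lemma orb_eq_image_of_periodic {σ : Equiv.Perm X} {x : X} {p : ℕ} (hp : 0 < p)
    (h : (σ ^ p) x = x) : orb σ x = (fun n : ℕ => (σ ^ n) x) '' Set.Iio p := by
  have key : ∀ q : ℤ, (σ ^ (p * q : ℤ)) x = x := by
    intro q
    rw [zpow_mul]
    have hfix : Function.IsFixedPt (σ ^ (p:ℤ)) x := by rwa [zpow_natCast]
    exact hfix.perm_zpow q
  ext w
  constructor
  · rintro ⟨d, rfl⟩
    refine ⟨(d % p).toNat, ?_, ?_⟩
    · have h1 : (0:ℤ) ≤ d % p := Int.emod_nonneg d (by positivity)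
      have h2 : d % p < p := Int.emod_lt_of_pos d (by exact_mod_cast hp)
      simp only [Set.mem_Iio]
      omega
    · have h1 : (0:ℤ) ≤ d % p := Int.emod_nonneg d (by positivity)
      have : d = p * (d / p) + d % p := (Int.mul_ediv_add_emod d p).symm
      simp only
      rw [← zpow_natCast, Int.toNat_of_nonneg h1]
      conv_rhs => rw [this]
      rw [add_comm, zpow_add, Equiv.Perm.mul_apply, key]
  · rintro ⟨n, _, rfl⟩
    refine ⟨(n : ℤ), ?_⟩
    simp only [zpow_natCast]

/-- If `σ` and `τ` agree on a finite `τ`-invariant set `P`, then orbits of points of `P` agree. -/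
lemma orb_eq_orb_of_agree {σ τ : Equiv.Perm X} {P : Set X} (hfin : P.Finite)
    (hmaps : Set.MapsTo τ P P) (heq : ∀ x ∈ P, σ x = τ x) {y : X} (hy : y ∈ P) :
    orb σ y = orb τ y := by
  have hbij : Set.BijOn τ P P :=
    ((hfin.injOn_iff_bijOn_of_mapsTo hmaps).mp (τ.injective.injOn))
  have hinv : ∀ x ∈ P, σ⁻¹ x = τ⁻¹ x ∧ τ⁻¹ x ∈ P := by
    intro x hx
    obtain ⟨w, hw, rfl⟩ := hbij.surjOn hx
    have h1 : τ⁻¹ (τ w) = w := τ.symm_apply_apply w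
    have h2 : σ⁻¹ (τ w) = w := by
      rw [← heq w hw]; exact σ.symm_apply_apply w
    exact ⟨h2.trans h1.symm, by rwa [h1]⟩
  have fwd : ∀ n : ℕ, ∀ x ∈ P, (σ ^ n) x = (τ ^ n) x ∧ (τ ^ n) x ∈ P := by
    intro n
    induction n with
    | zero => intro x hx; simpa using hx
    | succ n ih =>
      intro x hx
      obtain ⟨h1, h2⟩ := ih x hx
      rw [pow_succ', pow_succ', Equiv.Perm.mul_apply, Equiv.Perm.mul_apply, h1, heq _ h2]
      exact ⟨rfl, hmaps h2⟩
  have bwd : ∀ n : ℕ, ∀ x ∈ P, (σ⁻¹ ^ n) x = (τ⁻¹ ^ n) x ∧ (τ⁻¹ ^ n) x ∈ P := by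
    intro n
    induction n with
    | zero => intro x hx; simpa using hx
    | succ n ih =>
      intro x hx
      obtain ⟨h1, h2⟩ := ih x hx
      rw [pow_succ', pow_succ', Equiv.Perm.mul_apply, Equiv.Perm.mul_apply, h1,
        (hinv _ h2).1]
      exact ⟨rfl, (hinv _ h2).2⟩
  have key : ∀ d : ℤ, (σ ^ d) y = (τ ^ d) y := by
    intro d
    rcases Int.natAbs_eq d with h | h
    · rw [h, zpow_natCast, zpow_natCast]
      exact (fwd d.natAbs y hy).1
    · rw [h, zpow_neg, zpow_neg, zpow_natCast, zpow_natCast, ← inv_pow, ← inv_pow]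
      exact (bwd d.natAbs y hy).1
  have h2 : (fun d : ℤ => (σ ^ d) y) = fun d : ℤ => (τ ^ d) y := funext key
  unfold orb
  rw [h2]

lemma orb_conj (c x : Equiv.Perm X) (y : X) :
    orb (x⁻¹ * c * x) y = ⇑x⁻¹ '' orb c (x y) := by
  have hz : ∀ d : ℤ, (x⁻¹ * c * x) ^ d = x⁻¹ * c ^ d * x := by
    intro d
    have := conj_zpow (i := d) (a := x⁻¹) (b := c)
    rwa [inv_inv] at this
  ext w
  constructor
  · rintro ⟨d, rfl⟩
    exact ⟨(c ^ d) (x y), ⟨d, rfl⟩, by simp [hz d]⟩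
  · rintro ⟨v, ⟨d, rfl⟩, rfl⟩
    exact ⟨d, by simp [hz d]⟩

lemma nset_conj (r : ℕ) (c x : Equiv.Perm X) :
    nset r (x⁻¹ * c * x) = ⇑x⁻¹ '' nset r c := by
  ext y
  simp only [nset, Set.mem_setOf_eq, orb_conj]
  rw [Set.ncard_image_of_injective _ x⁻¹.injective]
  constructor
  · intro h
    exact ⟨x y, h, by simp⟩
  · rintro ⟨v, hv, rfl⟩
    simpa using hv

lemma ncard_nset_conj (r : ℕ) (c x : Equiv.Perm X) :
    (nset r (x⁻¹ * c * x)).ncard = (nset r c).ncard := by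
  rw [nset_conj, Set.ncard_image_of_injective _ x⁻¹.injective]

lemma orb_finite_of_mem_nset {r : ℕ} (hr : 0 < r) {σ : Equiv.Perm X} {x : X}
    (h : x ∈ nset r σ) : (orb σ x).Finite :=
  Set.finite_of_ncard_ne_zero (by rw [h]; omega)

/-- Key upper bound: points on size-`r` orbits of `σ * g` either lie on size-`r` orbits
of `σ` or on (size-`r`) orbits meeting the support of `g`. -/
lemma nset_mul_subset (σ g : Equiv.Perm X) {r : ℕ} (hr : 0 < r) :
    nset r (σ * g) ⊆ nset r σ ∪
      ⋃ d ∈ {x | g x ≠ x} ∩ nset r (σ * g), orb (σ * g) d := by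
  intro x hx
  by_cases hmeet : ∃ d ∈ {y | g y ≠ y}, d ∈ orb (σ * g) x
  · obtain ⟨d, hd, hdo⟩ := hmeet
    right
    have horb : orb (σ * g) d = orb (σ * g) x := orb_eq_of_mem hdo
    refine Set.mem_biUnion ⟨hd, ?_⟩ ?_
    · show (orb (σ * g) d).ncard = r
      rw [horb]; exact hx
    · rw [horb]; exact mem_orb_self _ _
  · left
    push_neg at hmeet
    have hfix : ∀ y ∈ orb (σ * g) x, g y = y := by
      intro y hy
      by_contra hne
      exact (hmeet y hne) hy
    have heq : ∀ y ∈ orb (σ * g) x, σ y = (σ * g) y := by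
      intro y hy
      rw [Equiv.Perm.mul_apply, hfix y hy]
    have hfin : (orb (σ * g) x).Finite := orb_finite_of_mem_nset hr hx
    have : orb σ x = orb (σ * g) x :=
      orb_eq_orb_of_agree hfin (mapsTo_orb _ _) heq (mem_orb_self _ _)
    show (orb σ x).ncard = r
    rw [this]; exact hx

lemma nset_mul_finite_card (σ g : Equiv.Perm X) {r : ℕ} (hr : 0 < r)
    (hS : (nset r σ).Finite) (hD : {x | g x ≠ x}.Finite) :
    (nset r (σ * g)).Finite ∧
      (nset r (σ * g)).ncard ≤ (nset r σ).ncard + r * {x | g x ≠ x}.ncard := by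
  classical
  set D' : Set X := {x | g x ≠ x} ∩ nset r (σ * g) with hD'
  have hD'fin : D'.Finite := hD.subset (Set.inter_subset_left)
  have horbfin : ∀ d ∈ D', (orb (σ * g) d).Finite := fun d hd =>
    orb_finite_of_mem_nset hr hd.2
  have hBfin : (⋃ d ∈ D', orb (σ * g) d).Finite :=
    Set.Finite.biUnion hD'fin horbfin
  have hsub := nset_mul_subset σ g hr
  have hfin : (nset r (σ * g)).Finite := (hS.union hBfin).subset hsub
  refine ⟨hfin, ?_⟩
  have hB : (⋃ d ∈ D', orb (σ * g) d).ncard ≤ r * {x | g x ≠ x}.ncard := by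
    set Fb : Finset X := hD'fin.toFinset.biUnion
      (fun d => if h : (orb (σ * g) d).Finite then h.toFinset else ∅) with hFb
    have hsub2 : (⋃ d ∈ D', orb (σ * g) d) ⊆ ↑Fb := by
      intro y hy
      simp only [Set.mem_iUnion, exists_prop] at hy
      obtain ⟨d, hd, hyd⟩ := hy
      rw [Finset.mem_coe, hFb, Finset.mem_biUnion]
      refine ⟨d, hD'fin.mem_toFinset.mpr hd, ?_⟩
      rw [dif_pos (horbfin d hd)]
      exact (horbfin d hd).mem_toFinset.mpr hyd
    have hcard : Fb.card ≤ r * hD'fin.toFinset.card := by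
      refine le_trans (Finset.card_biUnion_le) ?_
      have hb : ∀ d ∈ hD'fin.toFinset,
          (if h : (orb (σ * g) d).Finite then h.toFinset else ∅).card ≤ r := by
        intro d hd
        have hdD : d ∈ D' := hD'fin.mem_toFinset.mp hd
        rw [dif_pos (horbfin d hdD),
          ← Set.ncard_eq_toFinset_card _ (horbfin d hdD), hdD.2]
      have := Finset.sum_le_card_nsmul hD'fin.toFinset _ r hb
      rw [smul_eq_mul] at this
      exact this.trans_eq (mul_comm _ _)
    calc (⋃ d ∈ D', orb (σ * g) d).ncard ≤ (↑Fb : Set X).ncard :=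
          Set.ncard_le_ncard hsub2 (Fb.finite_toSet)
      _ = Fb.card := Set.ncard_coe_finset Fb
      _ ≤ r * hD'fin.toFinset.card := hcard
      _ ≤ r * {x | g x ≠ x}.ncard := by
          refine Nat.mul_le_mul_left _ ?_
          rw [← Set.ncard_eq_toFinset_card _ hD'fin]
          exact Set.ncard_le_ncard Set.inter_subset_left hD
  calc (nset r (σ * g)).ncard
      ≤ (nset r σ ∪ ⋃ d ∈ D', orb (σ * g) d).ncard :=
        Set.ncard_le_ncard hsub (hS.union hBfin)
    _ ≤ (nset r σ).ncard + (⋃ d ∈ D', orb (σ * g) d).ncard := Set.ncard_union_le _ _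
    _ ≤ (nset r σ).ncard + r * {x | g x ≠ x}.ncard := by omega

/-- In an infinite set of moved points, one can find `k` points no one of which is mapped
to another by `ρ`. -/
lemma exists_sep (ρ : Equiv.Perm X) {M : Set X} (hM : M.Infinite)
    (hMmov : ∀ x ∈ M, ρ x ≠ x) (k : ℕ) :
    ∃ v : Fin k → X, Function.Injective v ∧ ∀ a b : Fin k, ρ (v a) ≠ v b := by
  induction k with
  | zero => exact ⟨Fin.elim0, fun a => a.elim0, fun a => a.elim0⟩
  | succ k ih =>
    obtain ⟨v, hvinj, hvsep⟩ := ih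
    have hB : (Set.range v ∪ (⇑ρ '' Set.range v ∪ ⇑ρ⁻¹ '' Set.range v)).Finite :=
      ((Set.finite_range v).union (((Set.finite_range v).image _).union
        ((Set.finite_range v).image _)))
    obtain ⟨x, hxM, hxB⟩ := (hM.diff hB).nonempty
    refine ⟨Fin.cons x v, ?_, ?_⟩
    · refine (Fin.cons_injective_iff).mpr ⟨?_, hvinj⟩
      intro hx
      exact hxB (Or.inl hx)
    · intro a b
      refine Fin.cases ?_ ?_ a
      · refine Fin.cases ?_ ?_ b
        · simpa using hMmov x hxM
        · intro b'
          simp only [Fin.cons_zero, Fin.cons_succ]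
          intro h
          apply hxB
          right; right
          exact ⟨v b', ⟨b', rfl⟩, by rw [← h]; exact ρ.symm_apply_apply x⟩
      · intro a'
        refine Fin.cases ?_ ?_ b
        · simp only [Fin.cons_zero, Fin.cons_succ]
          intro h
          exact hxB (Or.inr (Or.inl ⟨v a', ⟨a', rfl⟩, h⟩))
        · intro b'
          simpa using hvsep a' b'

lemma orb_of_fixed {ρ : Equiv.Perm X} {x : X} (h : ρ x = x) : orb ρ x = {x} := by
  ext w
  constructor
  · rintro ⟨d, rfl⟩
    exact ((Function.IsFixedPt.perm_zpow h d))
  · rintro rfl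
    exact ⟨0, rfl⟩

section DecEq
variable [DecidableEq X]

lemma swap_mul_swap_mem_falt_overlap {a b c : X} (hab : a ≠ b) (hbc : b ≠ c) :
    Equiv.swap a b * Equiv.swap b c ∈ FAlt X := by
  rcases eq_or_ne a c with rfl | hac
  · rw [Equiv.swap_comm b a, Equiv.swap_mul_self]
    exact one_mem _
  · apply Subgroup.subset_closure
    have hsupp : {x | (Equiv.swap a b * Equiv.swap b c) x ≠ x} = {a, b, c} := by
      ext x
      simp only [Set.mem_setOf_eq, Equiv.Perm.mul_apply, Set.mem_insert_iff,
        Set.mem_singleton_iff]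
      rcases eq_or_ne x a with rfl | hxa
      · rw [Equiv.swap_apply_of_ne_of_ne hab hac, Equiv.swap_apply_left]
        simp [hab.symm]
      rcases eq_or_ne x b with rfl | hxb
      · rw [Equiv.swap_apply_left, Equiv.swap_apply_of_ne_of_ne hac.symm hbc.symm]
        simp [hbc.symm]
      rcases eq_or_ne x c with rfl | hxc
      · rw [Equiv.swap_apply_right, Equiv.swap_apply_right]
        simp [hac.symm, hac]
      · rw [Equiv.swap_apply_of_ne_of_ne hxb hxc, Equiv.swap_apply_of_ne_of_ne hxa hxb]
        simp [hxa, hxb, hxc]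
    rw [Set.mem_setOf_eq, hsupp]
    rw [Set.ncard_insert_of_notMem (by simp [hab, hac]),
      Set.ncard_insert_of_notMem (by simp [hbc]), Set.ncard_singleton]

lemma swap_mul_swap_mem_falt {a b c d : X} (hab : a ≠ b) (hcd : c ≠ d) :
    Equiv.swap a b * Equiv.swap c d ∈ FAlt X := by
  rcases eq_or_ne b c with rfl | hbc
  · exact swap_mul_swap_mem_falt_overlap hab hcd
  · have : Equiv.swap a b * Equiv.swap c d =
        (Equiv.swap a b * Equiv.swap b c) * (Equiv.swap b c * Equiv.swap c d) := by
      rw [mul_assoc, ← mul_assoc (Equiv.swap b c), Equiv.swap_mul_self, one_mul]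
    rw [this]
    exact mul_mem (swap_mul_swap_mem_falt_overlap hab hbc)
      (swap_mul_swap_mem_falt_overlap hbc hcd)

/-- A product of an even number of transpositions lies in `FAlt`. -/
lemma prod_swaps_mem_falt (l : List (Equiv.Perm X))
    (h : ∀ σ ∈ l, ∃ a b, a ≠ b ∧ σ = Equiv.swap a b) (he : Even l.length) :
    l.prod ∈ FAlt X := by
  obtain ⟨n, hn⟩ := he
  induction n generalizing l with
  | zero =>
    have : l = [] := List.eq_nil_of_length_eq_zero (by omega)
    rw [this, List.prod_nil]
    exact one_mem _
  | succ n ih =>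
    match l, hn with
    | [], hn => simp only [List.length_nil] at hn; omega
    | [σ], hn => simp only [List.length_cons, List.length_nil] at hn; omega
    | σ :: τ :: l', hn =>
      have hst : σ * τ ∈ FAlt X := by
        obtain ⟨a, b, hab, rfl⟩ := h σ (by simp)
        obtain ⟨c, d, hcd, rfl⟩ := h τ (by simp)
        exact swap_mul_swap_mem_falt hab hcd
      have hl' : l'.prod ∈ FAlt X := by
        refine ih l' (fun x hx => h x (by simp [hx])) ?_
        simp only [List.length_cons] at hn
        omega
      have hprod : (σ :: τ :: l').prod = (σ * τ) * l'.prod := by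
        simp [mul_assoc]
      rw [hprod]
      exact mul_mem hst hl'

set_option linter.unusedSectionVars false in
/-- product of permutations all fixing `x` fixes `x`. -/
lemma prod_apply_eq_self (l : List (Equiv.Perm X)) (x : X) (h : ∀ σ ∈ l, σ x = x) :
    l.prod x = x := by
  induction l with
  | nil => simp
  | cons σ l ih =>
    rw [List.prod_cons, Equiv.Perm.mul_apply, ih (fun τ ht => h τ (by simp [ht])),
      h σ (by simp)]

set_option linter.unusedSectionVars false in
/-- product of pairwise disjoint permutations acts like the factor that moves the point. -/
lemma prod_apply_eq_of_mem (l : List (Equiv.Perm X)) (hdisj : l.Pairwise Equiv.Perm.Disjoint)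
    {σ : Equiv.Perm X} (hσ : σ ∈ l) {x : X} (hx : σ x ≠ x) : l.prod x = σ x := by
  induction l with
  | nil => simp at hσ
  | cons τ l ih =>
    rw [List.prod_cons, Equiv.Perm.mul_apply]
    rcases List.mem_cons.mp hσ with rfl | hσ'
    · rw [prod_apply_eq_self l x]
      intro π hπ
      rcases (List.pairwise_cons.mp hdisj).1 π hπ x with h | h
      · exact absurd h hx
      · exact h
    · rw [ih (List.pairwise_cons.mp hdisj).2 hσ']
      have hσx : σ (σ x) ≠ σ x := fun h => hx (σ.injective h)
      rcases (List.pairwise_cons.mp hdisj).1 σ hσ' (σ x) with h | h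
      · exact h
      · exact absurd h hσx

lemma orb_formPerm {l : List X} (hl : l.Nodup) {i : ℕ} (hi : i < l.length) :
    orb l.formPerm (l[i]) = {x | x ∈ l} := by
  have hp0 : 0 < l.length := Nat.zero_lt_of_lt hi
  have hper : (l.formPerm ^ l.length) l[i] = l[i] := by
    rw [List.formPerm_pow_apply_getElem l hl _ i hi]
    congr 1
    rw [Nat.add_mod_right, Nat.mod_eq_of_lt hi]
  rw [orb_eq_image_of_periodic hp0 hper]
  ext w
  constructor
  · rintro ⟨n, _, rfl⟩
    simp only [List.formPerm_pow_apply_getElem l hl n i hi, Set.mem_setOf_eq]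
    exact List.getElem_mem _
  · intro hw
    obtain ⟨j, hj, rfl⟩ := List.mem_iff_getElem.mp hw
    refine ⟨(j + l.length - i) % l.length, Nat.mod_lt _ hp0, ?_⟩
    simp only [List.formPerm_pow_apply_getElem l hl _ i hi]
    have hmod : (i + (j + l.length - i) % l.length) % l.length
        = (i + (j + l.length - i)) % l.length := by
      rw [Nat.add_mod, Nat.mod_mod_of_dvd _ (dvd_refl _), ← Nat.add_mod]
    have h2 : i + (j + l.length - i) = j + l.length := by omega
    congr 1
    rw [hmod, h2, Nat.add_mod_right, Nat.mod_eq_of_lt hj]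

lemma ncard_mem_list {l : List X} (hl : l.Nodup) : {x | x ∈ l}.ncard = l.length := by
  rw [← List.coe_toFinset, Set.ncard_coe_finset, List.toFinset_card_of_nodup hl]

lemma idx_lt {m r j i : ℕ} (hj : j < m) (hi : i < r) : j * r + i < m * r := by
  calc j * r + i < j * r + r := by omega
    _ = (j + 1) * r := by ring
    _ ≤ m * r := Nat.mul_le_mul_right r hj

/-- The block list for block `j`. -/
def blist (w : ℕ → X) (r j : ℕ) : List X := (List.range r).map fun i => w (j * r + i)

lemma blist_length (w : ℕ → X) (r j : ℕ) : (blist w r j).length = r := by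
  simp [blist]

lemma blist_getElem (w : ℕ → X) (r j : ℕ) {i : ℕ} (hi : i < (blist w r j).length) :
    (blist w r j)[i] = w (j * r + i) := by
  simp [blist]

lemma blist_nodup {w : ℕ → X} {m r : ℕ}
    (hw : ∀ n n', n < m * r → n' < m * r → w n = w n' → n = n') {j : ℕ} (hj : j < m) :
    (blist w r j).Nodup := by
  refine List.Nodup.map_on ?_ List.nodup_range
  intro a ha b hb hab
  simp only [List.mem_range] at ha hb
  have := hw _ _ (idx_lt hj ha) (idx_lt hj hb) hab
  omega

lemma mem_blist {w : ℕ → X} {r j : ℕ} {x : X} :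
    x ∈ blist w r j ↔ ∃ i, i < r ∧ x = w (j * r + i) := by
  simp only [blist, List.mem_map, List.mem_range]
  exact ⟨fun ⟨i, hi, h⟩ => ⟨i, hi, h.symm⟩, fun ⟨i, hi, h⟩ => ⟨i, hi, h.symm⟩⟩

/-- If `π` acts on the block points as the cyclic shift, then each block point has an orbit
of size exactly `r`. -/
lemma block_orbits {w : ℕ → X} {m r : ℕ} (hr : 0 < r)
    (hw : ∀ n n', n < m * r → n' < m * r → w n = w n' → n = n')
    (π : Equiv.Perm X)
    (hact : ∀ j i, j < m → i < r → π (w (j * r + i)) = w (j * r + (i + 1) % r)) :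
    ∀ j i, j < m → i < r → (orb π (w (j * r + i))).ncard = r := by
  intro j i hj hi
  set L := blist w r j with hL
  have hlen : L.length = r := blist_length w r j
  have hnodup : L.Nodup := blist_nodup hw hj
  have hfinP : ({x | x ∈ L} : Set X).Finite := by
    rw [← List.coe_toFinset]
    exact (L.toFinset).finite_toSet
  have heq : ∀ x ∈ {x | x ∈ L}, π x = L.formPerm x := by
    intro x hx
    obtain ⟨i', hi', rfl⟩ := List.mem_iff_getElem.mp hx
    rw [List.formPerm_apply_getElem L hnodup i' hi', blist_getElem,
      blist_getElem, hact j i' hj (by omega)]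
    congr 2
    rw [hlen]
  have hmaps : Set.MapsTo L.formPerm {x | x ∈ L} {x | x ∈ L} := by
    intro x hx
    exact List.formPerm_apply_mem_of_mem hx
  have hmem : w (j * r + i) ∈ {x | x ∈ L} := by
    rw [Set.mem_setOf_eq, mem_blist]
    exact ⟨i, hi, rfl⟩
  have horb : orb π (w (j * r + i)) = orb L.formPerm (w (j * r + i)) :=
    orb_eq_orb_of_agree hfinP hmaps heq hmem
  have hi'' : i < L.length := by omega
  have hgetw : L[i] = w (j * r + i) := blist_getElem w r j hi''
  rw [horb, ← hgetw, orb_formPerm hnodup hi'', ncard_mem_list hnodup, hlen]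

lemma succ_mod_ne {r i : ℕ} (hr : 2 ≤ r) (hi : i < r) : (i + 1) % r ≠ i := by
  rcases eq_or_lt_of_le (Nat.succ_le_of_lt hi) with h | h
  · rw [show i + 1 = r from h, Nat.mod_self]
    omega
  · rw [Nat.mod_eq_of_lt h]
    omega

lemma ncard_Iio (n : ℕ) : (Set.Iio n).ncard = n := by
  rw [← Finset.coe_range, Set.ncard_coe_finset, Finset.card_range]

/-- Case 1: infinitely many fixed points. -/
lemma exists_gadget_fixed (ρ : Equiv.Perm X) (w : ℕ → X) (hwinj : Function.Injective w)
    (hfixw : ∀ n, ρ (w n) = w n) {m r : ℕ} (hr2 : 2 ≤ r) (hm : Even m) :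
    ∃ g : Equiv.Perm X, g ∈ FAlt X ∧ {x | g x ≠ x}.Finite ∧
      {x | g x ≠ x}.ncard ≤ 2 * (m * r) ∧
      ∃ Y : Set X, Y.ncard = m * r ∧ Y ⊆ nset r (ρ * g) := by
  have hr : 0 < r := by omega
  have hw : ∀ n n', n < m * r → n' < m * r → w n = w n' → n = n' :=
    fun n n' _ _ h => hwinj h
  set lst : List (Equiv.Perm X) :=
    (List.range m).map (fun j => (blist w r j).formPerm) with hlst
  set g : Equiv.Perm X := lst.prod with hgdef
  -- blists of distinct blocks are disjoint as sets
  have hblist_disj : ∀ j j', j < m → j' < m → j ≠ j' → ∀ x, x ∈ blist w r j →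
      x ∉ blist w r j' := by
    intro j j' hj hj' hne x hx hx'
    obtain ⟨i, hi, rfl⟩ := mem_blist.mp hx
    obtain ⟨i', hi', he⟩ := mem_blist.mp hx'
    have := hw _ _ (idx_lt hj hi) (idx_lt hj' hi') he
    have : j = j' := by
      have h1 : i < r := hi
      have h2 : i' < r := hi'
      nlinarith [this]
    exact hne this
  have hdisj : lst.Pairwise Equiv.Perm.Disjoint := by
    rw [hlst, List.pairwise_iff_getElem]
    intro a b ha hb hab
    simp only [List.length_map, List.length_range] at ha hb
    simp only [List.getElem_map, List.getElem_range]
    intro x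
    by_cases hx : x ∈ blist w r a
    · right
      exact List.formPerm_apply_of_notMem (hblist_disj a b ha hb (by omega) x hx)
    · left
      exact List.formPerm_apply_of_notMem hx
  -- action of g on block points
  have hgact : ∀ j i, j < m → i < r →
      g (w (j * r + i)) = w (j * r + (i + 1) % r) := by
    intro j i hj hi
    have hmem : (blist w r j).formPerm ∈ lst := by
      rw [hlst]
      exact List.mem_map.mpr ⟨j, List.mem_range.mpr hj, rfl⟩
    have hilen : i < (blist w r j).length := by rw [blist_length]; exact hi
    have happ : (blist w r j).formPerm (w (j * r + i)) = w (j * r + (i + 1) % r) := by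
      conv_lhs => rw [← blist_getElem w r j hilen]
      rw [List.formPerm_apply_getElem _ (blist_nodup hw hj) i hilen]
      rw [blist_getElem]
      congr 2
      rw [blist_length]
    have hne : (blist w r j).formPerm (w (j * r + i)) ≠ w (j * r + i) := by
      rw [happ]
      intro h
      exact succ_mod_ne hr2 hi (by
        have := hw _ _ (idx_lt hj (Nat.mod_lt _ hr)) (idx_lt hj hi) h
        omega)
    rw [hgdef, prod_apply_eq_of_mem lst hdisj hmem hne, happ]
  -- support control
  have hsupp : {x | g x ≠ x} ⊆ w '' Set.Iio (m * r) := by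
    intro x hx
    by_contra hxm
    apply hx
    rw [hgdef]
    apply prod_apply_eq_self
    intro σ hσ
    rw [hlst] at hσ
    obtain ⟨j, hj, rfl⟩ := List.mem_map.mp hσ
    rw [List.mem_range] at hj
    apply List.formPerm_apply_of_notMem
    intro hxb
    obtain ⟨i, hi, rfl⟩ := mem_blist.mp hxb
    exact hxm ⟨j * r + i, idx_lt hj hi, rfl⟩
  have hsuppfin : {x | g x ≠ x}.Finite :=
    Set.Finite.subset ((Set.finite_Iio _).image w) hsupp
  have hsuppcard : {x | g x ≠ x}.ncard ≤ 2 * (m * r) := by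
    calc {x | g x ≠ x}.ncard ≤ (w '' Set.Iio (m * r)).ncard :=
          Set.ncard_le_ncard hsupp ((Set.finite_Iio _).image w)
      _ ≤ (Set.Iio (m * r)).ncard := Set.ncard_image_le (Set.finite_Iio _)
      _ = m * r := ncard_Iio _
      _ ≤ 2 * (m * r) := by omega
  -- FAlt membership
  have hfalt : g ∈ FAlt X := by
    have hrepr : g = (((List.range m).map
        (fun j => (blist w r j).zipWith Equiv.swap (blist w r j).tail)).flatten).prod := by
      rw [hgdef, hlst, List.prod_flatten, List.map_map]
      rfl
    rw [hrepr]
    apply prod_swaps_mem_falt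
    · intro σ hσ
      rw [List.mem_flatten] at hσ
      obtain ⟨lsw, hlsw, hσl⟩ := hσ
      obtain ⟨j, hj, rfl⟩ := List.mem_map.mp hlsw
      rw [List.mem_range] at hj
      obtain ⟨i, hi, hget⟩ := List.mem_iff_getElem.mp hσl
      have hil : i < r - 1 := by
        have := hi
        simp only [List.length_zipWith, List.length_tail, blist_length] at this
        omega
      have hi1 : i < (blist w r j).length := by rw [blist_length]; omega
      have hi2 : i < (blist w r j).tail.length := by
        rw [List.length_tail, blist_length]; omega
      refine ⟨w (j * r + i), w (j * r + (i + 1)), ?_, ?_⟩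
      · intro h
        have := hw _ _ (idx_lt hj (by omega)) (idx_lt hj (by omega)) h
        omega
      · rw [← hget, List.getElem_zipWith]
        congr 1
        · exact blist_getElem w r j hi1
        · rw [List.getElem_tail]
          have hi3 : i + 1 < (blist w r j).length := by rw [blist_length]; omega
          rw [blist_getElem w r j hi3]
    · rw [List.length_flatten]
      have hmap : ((List.range m).map
          (fun j => (blist w r j).zipWith Equiv.swap (blist w r j).tail)).map List.length
          = (List.range m).map (fun _ => r - 1) := by
        rw [List.map_map]
        apply List.map_congr_left
        intro j hj
        simp [List.length_zipWith, List.length_tail, blist_length]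
      rw [hmap]
      have : (List.range m).map (fun _ => r - 1) = List.replicate m (r - 1) := by
        rw [List.eq_replicate_iff]
        constructor
        · simp
        · intro b hb
          obtain ⟨j, hj, rfl⟩ := List.mem_map.mp hb
          rfl
      rw [this, List.sum_replicate, smul_eq_mul]
      exact hm.mul_right _
  -- orbits
  have hact : ∀ j i, j < m → i < r →
      (ρ * g) (w (j * r + i)) = w (j * r + (i + 1) % r) := by
    intro j i hj hi
    rw [Equiv.Perm.mul_apply, hgact j i hj hi, hfixw]
  have horb := block_orbits hr hw (ρ * g) hact
  refine ⟨g, hfalt, hsuppfin, hsuppcard, w '' Set.Iio (m * r), ?_, ?_⟩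
  · rw [Set.ncard_image_of_injective _ hwinj, ncard_Iio]
  · rintro y ⟨n, hn, rfl⟩
    have hn' : n < m * r := hn
    have hieq : n = (n / r) * r + n % r := by
      rw [mul_comm (n / r) r]
      exact (Nat.div_add_mod n r).symm
    have hjlt : n / r < m := Nat.div_lt_of_lt_mul (by rw [mul_comm] at hn'; exact hn')
    have hilt : n % r < r := Nat.mod_lt _ hr
    have := horb (n / r) (n % r) hjlt hilt
    rw [← hieq] at this
    exact this

lemma eucl {r j i j' i' : ℕ} (hr : 0 < r) (hi : i < r) (hi' : i' < r)
    (h : j * r + i = j' * r + i') : j = j' ∧ i = i' := by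
  have h1 : (j * r + i) % r = i := by
    rw [mul_comm j r, Nat.mul_add_mod, Nat.mod_eq_of_lt hi]
  have h2 : (j' * r + i') % r = i' := by
    rw [mul_comm j' r, Nat.mul_add_mod, Nat.mod_eq_of_lt hi']
  have h3 : (j * r + i) / r = j := by
    rw [mul_comm j r, Nat.mul_add_div hr, Nat.div_eq_of_lt hi, add_zero]
  have h4 : (j' * r + i') / r = j' := by
    rw [mul_comm j' r, Nat.mul_add_div hr, Nat.div_eq_of_lt hi', add_zero]
  constructor
  · rw [← h3, ← h4, h]
  · rw [← h1, ← h2, h]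

lemma succ_mod_inj {r i i' : ℕ} (hi : i < r) (hi' : i' < r)
    (h : (i + 1) % r = (i' + 1) % r) : i = i' := by
  rcases Nat.lt_or_ge (i + 1) r with h1 | h1
  · rcases Nat.lt_or_ge (i' + 1) r with h2 | h2
    · rw [Nat.mod_eq_of_lt h1, Nat.mod_eq_of_lt h2] at h
      omega
    · have h2' : i' + 1 = r := by omega
      rw [Nat.mod_eq_of_lt h1, h2', Nat.mod_self] at h
      omega
  · have h1' : i + 1 = r := by omega
    rcases Nat.lt_or_ge (i' + 1) r with h2 | h2
    · rw [h1', Nat.mod_self, Nat.mod_eq_of_lt h2] at h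
      omega
    · have h2' : i' + 1 = r := by omega
      omega

/-- the cyclic successor within a block -/
def nxt (r n : ℕ) : ℕ := (n / r) * r + (n % r + 1) % r

lemma nxt_eq {r : ℕ} (hr : 0 < r) (j : ℕ) {i : ℕ} (hi : i < r) :
    nxt r (j * r + i) = j * r + (i + 1) % r := by
  unfold nxt
  have h3 : (j * r + i) / r = j := by
    rw [mul_comm j r, Nat.mul_add_div hr, Nat.div_eq_of_lt hi, add_zero]
  have h1 : (j * r + i) % r = i := by
    rw [mul_comm j r, Nat.mul_add_mod, Nat.mod_eq_of_lt hi]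
  rw [h3, h1]

lemma nxt_lt {m r n : ℕ} (hr : 0 < r) (hn : n < m * r) : nxt r n < m * r := by
  have hj : n / r < m := Nat.div_lt_of_lt_mul (by rw [mul_comm] at hn; exact hn)
  exact idx_lt hj (Nat.mod_lt _ hr)

lemma nxt_inj {m r n n' : ℕ} (hr : 0 < r) (hn : n < m * r) (hn' : n' < m * r)
    (h : nxt r n = nxt r n') : n = n' := by
  unfold nxt at h
  obtain ⟨hj, hi⟩ := eucl hr (Nat.mod_lt (n % r + 1) hr) (Nat.mod_lt (n' % r + 1) hr) h
  have hieq := succ_mod_inj (Nat.mod_lt n hr) (Nat.mod_lt n' hr) hi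
  have hd := Nat.div_add_mod n r
  have hd' := Nat.div_add_mod n' r
  rw [hj, hieq] at hd
  omega

variable [DecidableEq X]

/-- Case 2: many moved points, with separation. -/
lemma exists_gadget_moved (ρ : Equiv.Perm X) (w : ℕ → X) {m r : ℕ} (hr : 0 < r) (hm : Even m)
    (hw : ∀ n n', n < m * r → n' < m * r → w n = w n' → n = n')
    (hsep : ∀ n n', n < m * r → n' < m * r → ρ (w n) ≠ w n') :
    ∃ g : Equiv.Perm X, g ∈ FAlt X ∧ {x | g x ≠ x}.Finite ∧
      {x | g x ≠ x}.ncard ≤ 2 * (m * r) ∧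
      ∃ Y : Set X, Y.ncard = m * r ∧ Y ⊆ nset r (ρ * g) := by
  set k := m * r with hk
  set z : ℕ → X := fun n => ρ⁻¹ (w (nxt r n)) with hz
  -- basic distinctness
  have hwz : ∀ n n', n < k → n' < k → w n ≠ z n' := by
    intro n n' hn hn' h
    have : ρ (w n) = w (nxt r n') := by
      rw [h, hz]
      exact ρ.apply_symm_apply _
    exact hsep n (nxt r n') hn (nxt_lt hr hn') this
  have hzinj : ∀ n n', n < k → n' < k → z n = z n' → n = n' := by
    intro n n' hn hn' h
    rw [hz] at h
    simp only at h
    have := ρ⁻¹.injective h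
    exact nxt_inj hr hn hn' (hw _ _ (nxt_lt hr hn) (nxt_lt hr hn') this)
  set lst : List (Equiv.Perm X) :=
    (List.range k).map (fun n => Equiv.swap (w n) (z n)) with hlst
  set g : Equiv.Perm X := lst.prod with hgdef
  have hdisj : lst.Pairwise Equiv.Perm.Disjoint := by
    rw [hlst, List.pairwise_iff_getElem]
    intro a b ha hb hab
    simp only [List.length_map, List.length_range] at ha hb
    simp only [List.getElem_map, List.getElem_range]
    intro x
    by_cases hx1 : x = w a ∨ x = z a
    · right
      have hxa : x ≠ w b := by
        rcases hx1 with rfl | rfl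
        · intro h; exact absurd (hw _ _ ha hb h) (by omega)
        · intro h; exact hwz b a hb ha h.symm
      have hxb : x ≠ z b := by
        rcases hx1 with rfl | rfl
        · exact hwz a b ha hb
        · intro h; exact absurd (hzinj _ _ ha hb h) (by omega)
      exact Equiv.swap_apply_of_ne_of_ne hxa hxb
    · left
      push_neg at hx1
      exact Equiv.swap_apply_of_ne_of_ne hx1.1 hx1.2
  have hgact : ∀ n, n < k → g (w n) = z n := by
    intro n hn
    have hmem : Equiv.swap (w n) (z n) ∈ lst := by
      rw [hlst]
      exact List.mem_map.mpr ⟨n, List.mem_range.mpr hn, rfl⟩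
    have hne : Equiv.swap (w n) (z n) (w n) ≠ w n := by
      rw [Equiv.swap_apply_left]
      exact fun h => hwz n n hn hn h.symm
    rw [hgdef, prod_apply_eq_of_mem lst hdisj hmem hne, Equiv.swap_apply_left]
  have hact : ∀ j i, j < m → i < r →
      (ρ * g) (w (j * r + i)) = w (j * r + (i + 1) % r) := by
    intro j i hj hi
    rw [Equiv.Perm.mul_apply, hgact _ (idx_lt hj hi), hz]
    simp only
    rw [show ∀ y, ρ (ρ⁻¹ y) = y from ρ.apply_symm_apply, nxt_eq hr j hi]
  -- support control
  have hsupp : {x | g x ≠ x} ⊆ w '' Set.Iio k ∪ z '' Set.Iio k := by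
    intro x hx
    by_contra hxm
    apply hx
    rw [hgdef]
    apply prod_apply_eq_self
    intro σ hσ
    rw [hlst] at hσ
    obtain ⟨n, hn, rfl⟩ := List.mem_map.mp hσ
    rw [List.mem_range] at hn
    refine Equiv.swap_apply_of_ne_of_ne ?_ ?_
    · intro h; exact hxm (Or.inl ⟨n, hn, h.symm⟩)
    · intro h; exact hxm (Or.inr ⟨n, hn, h.symm⟩)
  have hQfin : (w '' Set.Iio k ∪ z '' Set.Iio k).Finite :=
    ((Set.finite_Iio _).image w).union ((Set.finite_Iio _).image z)
  have hsuppfin : {x | g x ≠ x}.Finite := hQfin.subset hsupp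
  have hsuppcard : {x | g x ≠ x}.ncard ≤ 2 * k := by
    calc {x | g x ≠ x}.ncard ≤ (w '' Set.Iio k ∪ z '' Set.Iio k).ncard :=
          Set.ncard_le_ncard hsupp hQfin
      _ ≤ (w '' Set.Iio k).ncard + (z '' Set.Iio k).ncard := Set.ncard_union_le _ _
      _ ≤ (Set.Iio k).ncard + (Set.Iio k).ncard :=
          Nat.add_le_add (Set.ncard_image_le (Set.finite_Iio _))
            (Set.ncard_image_le (Set.finite_Iio _))
      _ = 2 * k := by rw [ncard_Iio]; omega
  have hfalt : g ∈ FAlt X := by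
    rw [hgdef, hlst]
    apply prod_swaps_mem_falt
    · intro σ hσ
      obtain ⟨n, hn, rfl⟩ := List.mem_map.mp hσ
      rw [List.mem_range] at hn
      exact ⟨w n, z n, hwz n n hn hn, rfl⟩
    · rw [List.length_map, List.length_range]
      exact hm.mul_right _
  have horb := block_orbits hr hw (ρ * g) hact
  refine ⟨g, hfalt, hsuppfin, hsuppcard, w '' Set.Iio k, ?_, ?_⟩
  · rw [Set.ncard_image_of_injOn, ncard_Iio]
    intro a ha b hb hab
    exact hw a b ha hb hab
  · rintro y ⟨n, hn, rfl⟩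
    have hn' : n < m * r := hn
    have hieq : n = (n / r) * r + n % r := by
      rw [mul_comm (n / r) r]
      exact (Nat.div_add_mod n r).symm
    have hjlt : n / r < m := Nat.div_lt_of_lt_mul (by rw [mul_comm] at hn'; exact hn')
    have := horb (n / r) (n % r) hjlt (Nat.mod_lt _ hr)
    rw [← hieq] at this
    exact this

/-- Main combined existence lemma. -/
lemma key_lemma [Infinite X] (ρ : Equiv.Perm X) {r : ℕ} (hr : 0 < r) (hfin : (nset r ρ).Finite)
    (m : ℕ) (hm : Even m) :
    ∃ g : Equiv.Perm X, g ∈ FAlt X ∧ (nset r (ρ * g)).Finite ∧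
      m * r ≤ (nset r (ρ * g)).ncard ∧
      (nset r (ρ * g)).ncard ≤ (nset r ρ).ncard + r * (2 * (m * r)) := by
  have hmain : ∃ g : Equiv.Perm X, g ∈ FAlt X ∧ {x | g x ≠ x}.Finite ∧
      {x | g x ≠ x}.ncard ≤ 2 * (m * r) ∧
      ∃ Y : Set X, Y.ncard = m * r ∧ Y ⊆ nset r (ρ * g) := by
    by_cases hF : {x | ρ x = x}.Infinite
    · -- infinitely many fixed points; then r ≥ 2
      have hr2 : 2 ≤ r := by
        rcases Nat.lt_or_ge r 2 with h1 | h1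
        · have hr1 : r = 1 := by omega
          exfalso
          apply hF
          apply hfin.subset
          intro x hx
          show (orb ρ x).ncard = r
          rw [orb_of_fixed hx, Set.ncard_singleton, hr1]
        · exact h1
      set e := Set.Infinite.natEmbedding _ hF with hedef
      set w : ℕ → X := fun n => (e n : X) with hwdef
      have hwinj : Function.Injective w := by
        intro a b h
        exact e.injective (Subtype.ext h)
      have hfixw : ∀ n, ρ (w n) = w n := fun n => (e n).2
      exact exists_gadget_fixed ρ w hwinj hfixw hr2 hm
    · -- cofinitely many moved points
      have hM : {x | ρ x ≠ x}.Infinite := by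
        rw [Set.not_infinite] at hF
        intro hMfin
        have : (Set.univ : Set X).Finite := by
          apply Set.Finite.subset (hF.union hMfin)
          intro x _
          by_cases h : ρ x = x
          · exact Or.inl h
          · exact Or.inr h
        exact Set.infinite_univ this
      obtain ⟨v, hvinj, hvsep⟩ := exists_sep ρ hM (fun x hx => hx) (m * r)
      by_cases hk : 0 < m * r
      · set w : ℕ → X := fun n => v ⟨n % (m * r), Nat.mod_lt _ hk⟩ with hwdef
        have hw : ∀ n n', n < m * r → n' < m * r → w n = w n' → n = n' := by
          intro n n' hn hn' h
          have := hvinj h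
          have h2 := Fin.mk.inj_iff.mp this
          rwa [Nat.mod_eq_of_lt hn, Nat.mod_eq_of_lt hn'] at h2
        have hsep : ∀ n n', n < m * r → n' < m * r → ρ (w n) ≠ w n' := by
          intro n n' hn hn'
          exact hvsep _ _
        exact exists_gadget_moved ρ w hr hm hw hsep
      · -- m * r = 0 : degenerate, use g = 1
        refine ⟨1, one_mem _, by simp, by simp, ∅, ?_, by simp⟩
        rw [Set.ncard_empty]
        exact (Nat.eq_zero_of_not_pos hk).symm
  obtain ⟨g, hgF, hDfin, hDcard, Y, hYcard, hYsub⟩ := hmain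
  obtain ⟨hNfin, hNcard⟩ := nset_mul_finite_card ρ g hr hfin hDfin
  refine ⟨g, hgF, hNfin, ?_, ?_⟩
  · rw [← hYcard]
    exact Set.ncard_le_ncard hYsub hNfin
  · calc (nset r (ρ * g)).ncard ≤ (nset r ρ).ncard + r * {x | g x ≠ x}.ncard := hNcard
      _ ≤ (nset r ρ).ncard + r * (2 * (m * r)) := by
          have := Nat.mul_le_mul_left r hDcard
          omega

end DecEq

end RinfAux

/-- If `G` fully contains `FAlt X` and `ρ ∈ N_{Sym(X)}(G)` has finitely many orbits of some
size `r ≥ 1`, then `R(φ_ρ) = ∞`. -/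
theorem rinfinite_of_finitely_many_orbits {X : Type*} [Infinite X]
    (G : Subgroup (Equiv.Perm X)) (hG : FAlt X ≤ G)
    (ρ : Equiv.Perm X) (hρ : ∀ g : Equiv.Perm X, g ∈ G ↔ ρ⁻¹ * g * ρ ∈ G)
    (r : ℕ) (hr : 0 < r)
    (hfin : {x : X | (Set.range fun d : ℤ => (ρ ^ d) x).ncard = r}.Finite) :
    Infinite (Quot (TwistedConj (phiRho G ρ hρ))) := by
  classical
  open RinfAux in
  have hfin' : (nset r ρ).Finite := hfin
  set φ := phiRho G ρ hρ with hφdef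
  set ν : ↥G → ℕ := fun a => (nset r (ρ * (a : Equiv.Perm X))).ncard with hνdef
  have hinv : ∀ a b : ↥G, TwistedConj φ a b → ν a = ν b := by
    intro a b ⟨x, hx⟩
    have hφx : ((φ x : ↥G) : Equiv.Perm X) = ρ⁻¹ * (x : Equiv.Perm X) * ρ := rfl
    have hb : (b : Equiv.Perm X) =
        (ρ⁻¹ * (x : Equiv.Perm X) * ρ)⁻¹ * (a : Equiv.Perm X) * (x : Equiv.Perm X) := by
      rw [← hx]
      push_cast
      rw [hφx]
    have hconj : ρ * (b : Equiv.Perm X) =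
        (x : Equiv.Perm X)⁻¹ * (ρ * (a : Equiv.Perm X)) * (x : Equiv.Perm X) := by
      rw [hb]; group
    show (nset r (ρ * (a : Equiv.Perm X))).ncard = (nset r (ρ * (b : Equiv.Perm X))).ncard
    rw [hconj, RinfAux.ncard_nset_conj]
  -- the sequence of parameters
  set s := (nset r ρ).ncard with hsdef
  set mseq : ℕ → ℕ := fun t => 2 * (s + 1) * (2 * r + 2) ^ (t + 1) with hmdef
  have hmeven : ∀ t, Even (mseq t) := fun t => ⟨(s + 1) * (2 * r + 2) ^ (t + 1), by ring⟩
  choose g hgF hNfin hNge hNle using fun t => RinfAux.key_lemma ρ hr hfin' (mseq t) (hmeven t)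
  set a : ℕ → ↥G := fun t => ⟨g t, hG (hgF t)⟩ with hadef
  have hν : ∀ t, ν (a t) = (nset r (ρ * g t)).ncard := fun t => rfl
  -- strict monotonicity
  have hmono : ∀ t t', t < t' → ν (a t) < ν (a t') := by
    intro t t' htt
    have hm_ge : (2 * r + 2) * mseq t ≤ mseq t' := by
      have hpow : (2 * r + 2) ^ (t + 1) * (2 * r + 2) ≤ (2 * r + 2) ^ (t' + 1) := by
        rw [← pow_succ]
        exact Nat.pow_le_pow_right (by omega) (by omega)
      calc (2 * r + 2) * mseq t = 2 * (s + 1) * ((2 * r + 2) ^ (t + 1) * (2 * r + 2)) := by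
            rw [hmdef]; ring
        _ ≤ 2 * (s + 1) * (2 * r + 2) ^ (t' + 1) := Nat.mul_le_mul_left _ hpow
        _ = mseq t' := rfl
    have hmt : s + 1 ≤ mseq t * r := by
      have h1 : s + 1 ≤ 2 * (s + 1) := by omega
      have h2 : 2 * (s + 1) ≤ mseq t := by
        rw [hmdef]
        have : 1 ≤ (2 * r + 2) ^ (t + 1) := Nat.one_le_pow _ _ (by omega)
        calc 2 * (s + 1) = 2 * (s + 1) * 1 := by ring
          _ ≤ 2 * (s + 1) * (2 * r + 2) ^ (t + 1) := Nat.mul_le_mul_left _ this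
      have h3 : mseq t ≤ mseq t * r := by
        calc mseq t = mseq t * 1 := by ring
          _ ≤ mseq t * r := Nat.mul_le_mul_left _ hr
      omega
    calc ν (a t) ≤ s + r * (2 * (mseq t * r)) := hNle t
      _ < 2 * (mseq t * r) + r * (2 * (mseq t * r)) := by omega
      _ = (2 * r + 2) * mseq t * r := by ring
      _ ≤ mseq t' * r := Nat.mul_le_mul_right r hm_ge
      _ ≤ ν (a t') := hNge t'
  -- injectivity of the classes
  set νbar : Quot (TwistedConj φ) → ℕ := Quot.lift ν hinv with hνbar
  have hinj : Function.Injective (fun t => Quot.mk (TwistedConj φ) (a t)) := by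
    intro t t' h
    have : ν (a t) = ν (a t') := by
      have := congrArg νbar h
      simpa using this
    rcases lt_trichotomy t t' with hlt | heq | hlt
    · exact absurd this (Nat.ne_of_lt (hmono _ _ hlt))
    · exact heq
    · exact absurd this.symm (Nat.ne_of_lt (hmono _ _ hlt))
  exact Infinite.of_injective _ hinj
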